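/- Let Ω ⊆ ℝⁿ be open and K ⊆ Ω compact. Then cap*_{p,ϑ}(K,Ω) = cap_{p,ϑ}(K,Ω); that is, inf { sup { cap*_{p,ϑ}(L,Ω) : L ⊆ U compact } : U open, K ⊆ U ⊆ Ω } = cap*_{p,ϑ}(K,Ω), so the relative (p(·),ϑ)-capacity obtained by the two-step extension to arbitrary sets agrees on compact sets with the original compact-set definition. -/

import Mathlib

open MeasureTheory Metric Set Filter ENNReal

noncomputable section

/-- The weighted variable exponent modular `ρ_{p,ϑ,A}(g) = ∫_A |g|^{p(x)} ϑ(x) dx`. -/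
def rhoMod {n : ℕ} (p ϑ : EuclideanSpace ℝ (Fin n) → ℝ)
    (A : Set (EuclideanSpace ℝ (Fin n))) (g : EuclideanSpace ℝ (Fin n) → ℝ) : ℝ≥0∞ :=
  ∫⁻ x in A, ENNReal.ofReal (|g x| ^ p x * ϑ x)

/-- Relative `(p(·),ϑ)`-capacity of a compact set `K` with respect to an open set `Ω`:
the infimum of `ρ_{p,ϑ,Ω}(‖Df‖)` over `C¹` functions with compact support contained in `Ω`
which are `≥ 1` on `K` (with `sInf ∅ = ∞`). -/
def relCapK {n : ℕ} (p ϑ : EuclideanSpace ℝ (Fin n) → ℝ)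
    (K Ω : Set (EuclideanSpace ℝ (Fin n))) : ℝ≥0∞ :=
  sInf ((fun f => rhoMod p ϑ Ω fun x => ‖fderiv ℝ f x‖) ''
    {f : EuclideanSpace ℝ (Fin n) → ℝ |
      ContDiff ℝ 1 f ∧ IsCompact (tsupport f) ∧ tsupport f ⊆ Ω ∧ ∀ x ∈ K, 1 ≤ f x})

/-- Relative capacity of an open subset `U ⊆ Ω`. -/
def relCapO {n : ℕ} (p ϑ : EuclideanSpace ℝ (Fin n) → ℝ)
    (U Ω : Set (EuclideanSpace ℝ (Fin n))) : ℝ≥0∞ :=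
  ⨆ (K : Set (EuclideanSpace ℝ (Fin n))) (_ : IsCompact K ∧ K ⊆ U), relCapK p ϑ K Ω

/-- Relative capacity of an arbitrary subset `A ⊆ Ω`. -/
def relCap {n : ℕ} (p ϑ : EuclideanSpace ℝ (Fin n) → ℝ)
    (A Ω : Set (EuclideanSpace ℝ (Fin n))) : ℝ≥0∞ :=
  ⨅ (U : Set (EuclideanSpace ℝ (Fin n))) (_ : IsOpen U ∧ A ⊆ U ∧ U ⊆ Ω), relCapO p ϑ U Ω

/-- The Sobolev `(p(·),ϑ)`-capacity of `A ⊆ ℝⁿ`. -/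
def sobCap {n : ℕ} (p ϑ : EuclideanSpace ℝ (Fin n) → ℝ)
    (A : Set (EuclideanSpace ℝ (Fin n))) : ℝ≥0∞ :=
  sInf ((fun f => ∫⁻ x, ENNReal.ofReal ((|f x| ^ p x + ‖fderiv ℝ f x‖ ^ p x) * ϑ x)) ''
    {f : EuclideanSpace ℝ (Fin n) → ℝ |
      ContDiff ℝ 1 f ∧ ∃ U, IsOpen U ∧ A ⊆ U ∧ ∀ x ∈ U, 1 ≤ f x})

/-- The weighted measure `μ_ϑ(A) = ∫_A ϑ(x) dx`. -/
def muW {n : ℕ} (ϑ : EuclideanSpace ℝ (Fin n) → ℝ)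
    (A : Set (EuclideanSpace ℝ (Fin n))) : ℝ≥0∞ :=
  ∫⁻ x in A, ENNReal.ofReal (ϑ x)

/-- `μ_ϑ` is doubling with constant `cd`. -/
def DoublingW {n : ℕ} (ϑ : EuclideanSpace ℝ (Fin n) → ℝ) (cd : ℝ) : Prop :=
  1 ≤ cd ∧ ∀ (x : EuclideanSpace ℝ (Fin n)) (r : ℝ), 0 < r →
    muW ϑ (ball x (2 * r)) ≤ ENNReal.ofReal cd * muW ϑ (ball x r)

/-- Poincaré hypothesis with constant `c` for the weight `ϑ`. -/
def PoincareHyp {n : ℕ} (ϑ : EuclideanSpace ℝ (Fin n) → ℝ) (c : ℝ) : Prop :=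
  ∀ Ω : Set (EuclideanSpace ℝ (Fin n)), IsOpen Ω → Bornology.IsBounded Ω →
    ∀ f : EuclideanSpace ℝ (Fin n) → ℝ, ContDiff ℝ 1 f → IsCompact (tsupport f) →
      tsupport f ⊆ Ω →
      ∫ x in Ω, |f x| * ϑ x ≤ c * diam Ω * ∫ x in Ω, ‖fderiv ℝ f x‖ * ϑ x

/-- Embedding hypothesis `L^{p(·)}_ϑ(Ω) ↪ L¹_ϑ(Ω)` with constants `c₁ Ω`. -/
def EmbeddingHyp {n : ℕ} (p ϑ : EuclideanSpace ℝ (Fin n) → ℝ)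
    (c₁ : Set (EuclideanSpace ℝ (Fin n)) → ℝ) : Prop :=
  ∀ Ω : Set (EuclideanSpace ℝ (Fin n)), IsOpen Ω → Bornology.IsBounded Ω →
    0 < c₁ Ω ∧ ∀ g : EuclideanSpace ℝ (Fin n) → ℝ, Measurable g → 1 ≤ rhoMod p ϑ Ω g →
      (∫⁻ x in Ω, ENNReal.ofReal (|g x| * ϑ x)) ≤ ENNReal.ofReal (c₁ Ω) * rhoMod p ϑ Ω g

/-- The Wiener sum `W^{sum}_{p,ϑ}(A,x₀)`. -/
def wienerSum {n : ℕ} (p ϑ : EuclideanSpace ℝ (Fin n) → ℝ)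
    (A : Set (EuclideanSpace ℝ (Fin n))) (x₀ : EuclideanSpace ℝ (Fin n)) : ℝ≥0∞ :=
  ∑' i : ℕ,
    (relCap p ϑ (A ∩ ball x₀ ((2 : ℝ) ^ (-(i : ℤ)))) (ball x₀ ((2 : ℝ) ^ (1 - (i : ℤ)))) /
        relCap p ϑ (ball x₀ ((2 : ℝ) ^ (-(i : ℤ)))) (ball x₀ ((2 : ℝ) ^ (1 - (i : ℤ))))) ^
      (1 / (p x₀ - 1))

/-- The Wiener type integral `W_{p,ϑ}(A,x₀)`. -/
def wienerInt {n : ℕ} (p ϑ : EuclideanSpace ℝ (Fin n) → ℝ)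
    (A : Set (EuclideanSpace ℝ (Fin n))) (x₀ : EuclideanSpace ℝ (Fin n)) : ℝ≥0∞ :=
  ∫⁻ r in Set.Ioo (0 : ℝ) 1,
    (relCap p ϑ (A ∩ ball x₀ r) (ball x₀ (2 * r)) /
        relCap p ϑ (ball x₀ r) (ball x₀ (2 * r))) ^ (1 / (p x₀ - 1)) / ENNReal.ofReal r

/-- On compact sets, the relative capacity obtained by the two-step extension to
arbitrary sets agrees with the original compact-set definition:
`cap_{p,ϑ}(K,Ω) = cap*_{p,ϑ}(K,Ω)`. -/
theorem stmt2 (n : ℕ) (hn : 1 ≤ n) (p ϑ : EuclideanSpace ℝ (Fin n) → ℝ)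
    (hp : Measurable p)
    (hpm : 1 < essInf p (volume : Measure (EuclideanSpace ℝ (Fin n))))
    (hpb : Filter.IsBoundedUnder (· ≤ ·) (ae (volume : Measure (EuclideanSpace ℝ (Fin n)))) p)
    (hϑpos : ∀ x, 0 < ϑ x)
    (hϑloc : LocallyIntegrable ϑ (volume : Measure (EuclideanSpace ℝ (Fin n))))
    (Ω K : Set (EuclideanSpace ℝ (Fin n))) (hΩ : IsOpen Ω) (hK : IsCompact K) (hKΩ : K ⊆ Ω) :
    relCap p ϑ K Ω = relCapK p ϑ K Ω := by
  refine le_antisymm ?_ ?_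
  · -- hard direction: relCap ≤ relCapK, via scaling
    refine ENNReal.le_of_forall_lt_one_mul_le fun a ha => ?_
    rcases eq_or_ne a 0 with rfl | ha0
    · simp
    have hane : a ≠ ∞ := (ha.trans one_lt_top).ne
    refine le_sInf ?_
    rintro r ⟨f, ⟨hf1, hf2, hf3, hf4⟩, rfl⟩
    obtain ⟨M₀, hM₀⟩ := hpb
    rw [Filter.eventually_map] at hM₀
    set M : ℝ := max M₀ 1 with hMdef
    have hM1 : (1 : ℝ) ≤ M := le_max_right _ _
    have hM0 : (0 : ℝ) < M := lt_of_lt_of_le one_pos hM1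
    have hMp : ∀ᵐ x ∂(volume : Measure (EuclideanSpace ℝ (Fin n))), p x ≤ M :=
      hM₀.mono fun x hx => hx.trans (le_max_left _ _)
    set t : ℝ := a.toReal with htdef
    have ht0 : 0 < t := ENNReal.toReal_pos ha0 hane
    have ht1 : t < 1 := by
      have : a < ENNReal.ofReal 1 := by simpa using ha
      simpa using ENNReal.toReal_lt_of_lt_ofReal this
    set δ : ℝ := t ^ (1 / M) with hδdef
    have hδ0 : 0 < δ := Real.rpow_pos_of_pos ht0 _
    have hδ1 : δ < 1 := Real.rpow_lt_one ht0.le ht1 (by positivity)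
    set U : Set (EuclideanSpace ℝ (Fin n)) := {x | δ < f x} with hUdef
    have hUopen : IsOpen U := isOpen_lt continuous_const hf1.continuous
    have hKU : K ⊆ U := fun x hx => lt_of_lt_of_le hδ1 (hf4 x hx)
    have hUΩ : U ⊆ Ω := fun x hx => hf3 (subset_tsupport f (by
      simp only [Function.mem_support]
      exact ne_of_gt (lt_trans hδ0 hx)))
    set g : EuclideanSpace ℝ (Fin n) → ℝ := fun x => δ⁻¹ * f x with hgdef
    have hgc : ContDiff ℝ 1 g := contDiff_const.mul hf1
    have hsupp : tsupport g = tsupport f := by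
      have hs : Function.support g = Function.support f := by
        ext x
        simp only [hgdef, Function.mem_support, mul_ne_zero_iff, ne_eq, inv_eq_zero]
        have := hδ0.ne'
        tauto
      rw [tsupport, tsupport, hs]
    have hder : ∀ x, fderiv ℝ g x = δ⁻¹ • fderiv ℝ f x := fun x =>
      fderiv_const_mul (hf1.differentiable one_ne_zero x) _
    have hdnorm : ∀ x, ‖fderiv ℝ g x‖ = δ⁻¹ * ‖fderiv ℝ f x‖ := by
      intro x
      rw [hder x, norm_smul, Real.norm_eq_abs, abs_of_pos (inv_pos.2 hδ0)]
    -- energy bound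
    have key : rhoMod p ϑ Ω (fun x => ‖fderiv ℝ g x‖) ≤
        a⁻¹ * rhoMod p ϑ Ω (fun x => ‖fderiv ℝ f x‖) := by
      have hpt : ∀ᵐ x ∂((volume : Measure (EuclideanSpace ℝ (Fin n))).restrict Ω),
          ENNReal.ofReal (|‖fderiv ℝ g x‖| ^ p x * ϑ x) ≤
            ENNReal.ofReal t⁻¹ * ENNReal.ofReal (|‖fderiv ℝ f x‖| ^ p x * ϑ x) := by
        refine ae_restrict_of_ae (hMp.mono fun x hx => ?_)
        rw [← ENNReal.ofReal_mul (inv_nonneg.2 ht0.le)]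
        refine ENNReal.ofReal_le_ofReal ?_
        rw [abs_norm, abs_norm, hdnorm x,
          Real.mul_rpow (inv_nonneg.2 hδ0.le) (norm_nonneg _)]
        have hexp : δ⁻¹ ^ p x ≤ t⁻¹ := by
          have h1 : δ⁻¹ ^ p x = t ^ (-(1 / M * p x)) := by
            rw [hδdef, Real.inv_rpow (Real.rpow_nonneg ht0.le _), ← Real.rpow_mul ht0.le,
              ← Real.rpow_neg ht0.le]
          have h2 : 1 / M * p x ≤ 1 := by
            calc 1 / M * p x ≤ 1 / M * M := by
                  apply mul_le_mul_of_nonneg_left hx (by positivity)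
              _ = 1 := one_div_mul_cancel (ne_of_gt hM0)
          rw [h1, ← Real.rpow_neg_one t]
          exact Real.rpow_le_rpow_of_exponent_ge ht0 ht1.le (by linarith)
        have hnn : 0 ≤ ‖fderiv ℝ f x‖ ^ p x := Real.rpow_nonneg (norm_nonneg _) _
        have hϑnn : 0 ≤ ϑ x := (hϑpos x).le
        calc δ⁻¹ ^ p x * ‖fderiv ℝ f x‖ ^ p x * ϑ x
            ≤ t⁻¹ * ‖fderiv ℝ f x‖ ^ p x * ϑ x := by
              apply mul_le_mul_of_nonneg_right _ hϑnn
              exact mul_le_mul_of_nonneg_right hexp hnn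
          _ = t⁻¹ * (‖fderiv ℝ f x‖ ^ p x * ϑ x) := by ring
      calc rhoMod p ϑ Ω (fun x => ‖fderiv ℝ g x‖)
          ≤ ∫⁻ x in Ω, ENNReal.ofReal t⁻¹ * ENNReal.ofReal (|‖fderiv ℝ f x‖| ^ p x * ϑ x) :=
            lintegral_mono_ae hpt
        _ = ENNReal.ofReal t⁻¹ * rhoMod p ϑ Ω (fun x => ‖fderiv ℝ f x‖) :=
            lintegral_const_mul' _ _ ENNReal.ofReal_ne_top
        _ = a⁻¹ * rhoMod p ϑ Ω (fun x => ‖fderiv ℝ f x‖) := by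
            rw [ENNReal.ofReal_inv_of_pos ht0, htdef, ENNReal.ofReal_toReal hane]
    have h1 : relCap p ϑ K Ω ≤ relCapO p ϑ U Ω := iInf₂_le U ⟨hUopen, hKU, hUΩ⟩
    have h2 : relCapO p ϑ U Ω ≤ rhoMod p ϑ Ω (fun x => ‖fderiv ℝ g x‖) := by
      refine iSup₂_le fun L hL => ?_
      refine sInf_le ⟨g, ⟨hgc, hsupp ▸ hf2, hsupp ▸ hf3, ?_⟩, rfl⟩
      intro x hx
      have hfx : δ ≤ f x := (hL.2 hx).le
      calc (1 : ℝ) = δ⁻¹ * δ := (inv_mul_cancel₀ hδ0.ne').symm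
        _ ≤ δ⁻¹ * f x := by
            exact mul_le_mul_of_nonneg_left hfx (inv_nonneg.2 hδ0.le)
    calc a * relCap p ϑ K Ω
        ≤ a * (a⁻¹ * rhoMod p ϑ Ω (fun x => ‖fderiv ℝ f x‖)) := by
          exact mul_le_mul_right (h1.trans (h2.trans key)) a
      _ = rhoMod p ϑ Ω (fun x => ‖fderiv ℝ f x‖) := by
          rw [← mul_assoc, ENNReal.mul_inv_cancel ha0 hane, one_mul]
  · -- easy direction
    refine le_iInf fun U => le_iInf fun hU => ?_
    exact le_iSup₂_of_le K ⟨hK, hU.2.1⟩ le_rfl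

end
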